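/- For every instance of the adversarial assignment problem (any number of tasks k, number of agents N, failure limit α ≤ N, and nonincreasing nonnegative profits t_1 ≥ t_2 ≥ ⋯ ≥ t_k ≥ 0), there exists an assignment x̃ that maximizes the worst-case profit g over all valid assignments and whose coordinates are nonincreasing, i.e., x̃_i ≥ x̃_j for all 1 ≤ i < j ≤ k. -/

import Mathlib

/-- Shifted Heaviside function `H(n) = min(1, n)`, as a real number. -/
noncomputable def H (n : ℕ) : ℝ := min 1 (n : ℝ)

/-- The worst-case profit `g(x) = min_{δ ∈ Δ_α(x)} Σ_i t_i · H(x_i − δ_i)`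
of an assignment `x`, where `Δ_α(x)` is the (finite, nonempty) set of attacks
`δ` with `Σ_i δ_i ≤ α` and `δ_i ≤ x_i` for all `i`. -/
noncomputable def worstProfit {k : ℕ} (t : Fin k → ℝ) (α : ℕ) (x : Fin k → ℕ) : ℝ :=
  ((Finset.Icc 0 x).filter (fun δ => ∑ i, δ i ≤ α)).inf'
    ⟨0, Finset.mem_filter.mpr ⟨Finset.mem_Icc.mpr ⟨le_rfl, fun i => Nat.zero_le _⟩, by simp⟩⟩
    (fun δ => ∑ i, t i * H (x i - δ i))

lemma H_nonneg (n : ℕ) : 0 ≤ H n := le_min zero_le_one (Nat.cast_nonneg n)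

lemma H_le_one (n : ℕ) : H n ≤ 1 := min_le_left _ _

lemma H_zero : H 0 = 0 := by simp [H]

lemma H_one_of {m n : ℕ} (h : m < n) : H (n - m) = 1 := by
  have h1 : (1:ℝ) ≤ ((n - m : ℕ) : ℝ) := by exact_mod_cast Nat.le_sub_of_add_le (by omega)
  simpa [H] using min_eq_left h1

lemma sum_split {M : Type*} [AddCommMonoid M] {k : ℕ} (i j : Fin k) (hij : i ≠ j)
    (F : Fin k → M) :
    ∑ u, F u = F i + F j + ∑ u ∈ (Finset.univ.erase i).erase j, F u := by
  rw [add_assoc,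
    Finset.add_sum_erase _ F (Finset.mem_erase.mpr ⟨hij.symm, Finset.mem_univ j⟩),
    Finset.add_sum_erase _ F (Finset.mem_univ i)]

/-- The key exchange lemma: moving the larger group to the earlier (more
profitable) task does not decrease the worst-case profit. -/
lemma worstProfit_swap_le {k : ℕ} (t : Fin k → ℝ) (α : ℕ)
    (ht_mono : ∀ i j : Fin k, i ≤ j → t j ≤ t i) (ht_nonneg : ∀ i, 0 ≤ t i)
    (x : Fin k → ℕ) (i j : Fin k) (hij : i < j) (hab : x i < x j) :
    worstProfit t α x ≤ worstProfit t α (x ∘ Equiv.swap i j) := by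
  classical
  set a := x i with ha
  set b := x j with hb
  have hne : i ≠ j := ne_of_lt hij
  set y : Fin k → ℕ := x ∘ Equiv.swap i j with hy
  have hyi : y i = b := by simp [hy]; exact hb.symm
  have hyj : y j = a := by simp [hy]; exact ha.symm
  have hyu : ∀ u, u ≠ i → u ≠ j → y u = x u := fun u h1 h2 => by
    simp [hy, Equiv.swap_apply_of_ne_of_ne h1 h2]
  apply Finset.le_inf'
  intro δ hδ
  rw [Finset.mem_filter, Finset.mem_Icc] at hδ
  obtain ⟨⟨-, hδle⟩, hδsum⟩ := hδ
  have hδi : δ i ≤ b := by have := hδle i; rwa [hyi] at this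
  have hδj : δ j ≤ a := by have := hδle j; rwa [hyj] at this
  set di : ℕ := if δ i < b ∧ δ j < a then 0 else a with hdi
  set dj : ℕ := if δ i = b ∧ δ j = a then b else 0 with hdj
  set δ' : Fin k → ℕ := fun u => if u = i then di else if u = j then dj else δ u with hδ'
  have hδ'i : δ' i = di := by simp [hδ']
  have hδ'j : δ' j = dj := by simp [hδ', hne.symm]
  have hδ'u : ∀ u, u ≠ i → u ≠ j → δ' u = δ u := fun u h1 h2 => by
    simp [hδ', h1, h2]
  have hpairsum : di + dj ≤ δ i + δ j := by
    rw [hdi, hdj]; split_ifs <;> omega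
  have hmem : δ' ∈ (Finset.Icc 0 x).filter (fun δ => ∑ u, δ u ≤ α) := by
    rw [Finset.mem_filter, Finset.mem_Icc]
    refine ⟨⟨fun u => Nat.zero_le _, fun u => ?_⟩, ?_⟩
    · by_cases h1 : u = i
      · rw [h1, hδ'i, hdi, ← ha]; split_ifs; exacts [Nat.zero_le _, le_rfl]
      · by_cases h2 : u = j
        · rw [h2, hδ'j, hdj, ← hb]; split_ifs; exacts [le_rfl, Nat.zero_le _]
        · rw [hδ'u u h1 h2, ← hyu u h1 h2]; exact hδle u
    · calc ∑ u, δ' u = δ' i + δ' j + ∑ u ∈ (Finset.univ.erase i).erase j, δ' u :=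
            sum_split i j hne δ'
        _ ≤ δ i + δ j + ∑ u ∈ (Finset.univ.erase i).erase j, δ u := by
            rw [hδ'i, hδ'j]
            refine add_le_add hpairsum (Finset.sum_le_sum fun u hu => ?_)
            rw [Finset.mem_erase, Finset.mem_erase] at hu
            rw [hδ'u u hu.2.1 hu.1]
        _ = ∑ u, δ u := (sum_split i j hne δ).symm
        _ ≤ α := hδsum
  refine le_trans (Finset.inf'_le _ hmem) ?_
  -- now the value comparison
  rw [sum_split i j hne (fun u => t u * H (x u - δ' u)),
      sum_split i j hne (fun u => t u * H (y u - δ u))]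
  have hrest : ∑ u ∈ (Finset.univ.erase i).erase j, t u * H (x u - δ' u)
      = ∑ u ∈ (Finset.univ.erase i).erase j, t u * H (y u - δ u) := by
    apply Finset.sum_congr rfl
    intro u hu
    rw [Finset.mem_erase, Finset.mem_erase] at hu
    rw [hδ'u u hu.2.1 hu.1, hyu u hu.2.1 hu.1]
  rw [hrest]
  have key : t i * H (x i - δ' i) + t j * H (x j - δ' j)
      ≤ t i * H (y i - δ i) + t j * H (y j - δ j) := by
    rw [hδ'i, hδ'j, hyi, hyj, ← ha, ← hb]
    have hti := ht_nonneg i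
    have htj := ht_nonneg j
    have htij := ht_mono i j (le_of_lt hij)
    by_cases h1 : δ i < b ∧ δ j < a
    · have hdi0 : di = 0 := by rw [hdi, if_pos h1]
      have hdj0 : dj = 0 := by rw [hdj, if_neg (by omega)]
      rw [hdi0, hdj0, H_one_of h1.1, H_one_of h1.2, Nat.sub_zero, Nat.sub_zero]
      have h2 : t i * H a ≤ t i * 1 := by
        exact mul_le_mul_of_nonneg_left (H_le_one a) hti
      have h3 : t j * H b ≤ t j * 1 := by
        exact mul_le_mul_of_nonneg_left (H_le_one b) htj
      nlinarith
    · have hdia : di = a := by rw [hdi, if_neg h1]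
      rw [hdia, Nat.sub_self, H_zero, mul_zero, zero_add]
      by_cases h2 : δ i = b ∧ δ j = a
      · have hdjb : dj = b := by rw [hdj, if_pos h2]
        rw [hdjb, Nat.sub_self, H_zero, mul_zero, h2.1, h2.2, Nat.sub_self,
          Nat.sub_self, H_zero]
        nlinarith
      · have hdj0 : dj = 0 := by rw [hdj, if_neg h2]
        rw [hdj0, Nat.sub_zero]
        have hjb : t j * H b ≤ t j := by
          have := mul_le_mul_of_nonneg_left (H_le_one b) htj
          linarith [this]
        by_cases h3 : δ j = a
        · -- then δ i < b (else h2)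
          have hib : δ i < b := by
            rcases lt_or_eq_of_le hδi with h | h
            · exact h
            · exact absurd ⟨h, h3⟩ h2
          rw [H_one_of hib, h3, Nat.sub_self, H_zero, mul_zero, mul_one, add_zero]
          linarith
        · have hja : δ j < a := by omega
          have hib : δ i = b := by
            rcases lt_or_eq_of_le hδi with h | h
            · exact absurd ⟨h, hja⟩ h1
            · exact h
          rw [hib, Nat.sub_self, H_zero, mul_zero, zero_add, H_one_of hja, mul_one]
          linarith
  linarith

/-- For every instance of the adversarial assignment problem there exists an
assignment maximizing the worst-case profit whose coordinates are nonincreasing. -/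
theorem decreasing_optimal_assignment (k N α : ℕ) (hα : α ≤ N)
    (t : Fin k → ℝ) (ht_mono : ∀ i j : Fin k, i ≤ j → t j ≤ t i)
    (ht_nonneg : ∀ i, 0 ≤ t i) :
    ∃ x' : Fin k → ℕ, (∑ i, x' i ≤ N) ∧
      (∀ i j : Fin k, i ≤ j → x' j ≤ x' i) ∧
      (∀ x : Fin k → ℕ, (∑ i, x i ≤ N) → worstProfit t α x ≤ worstProfit t α x') := by
  classical
  set S : Finset (Fin k → ℕ) :=
    (Finset.Icc 0 (fun _ : Fin k => N)).filter (fun x => ∑ u, x u ≤ N) with hS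
  have hmemS : ∀ x : Fin k → ℕ, (∑ u, x u ≤ N) → x ∈ S := by
    intro x hx
    rw [hS, Finset.mem_filter, Finset.mem_Icc]
    refine ⟨⟨fun u => Nat.zero_le _, fun u => ?_⟩, hx⟩
    exact le_trans (Finset.single_le_sum (fun v _ => Nat.zero_le (x v)) (Finset.mem_univ u)) hx
  have hSne : S.Nonempty := ⟨0, hmemS 0 (by simp)⟩
  obtain ⟨x0, hx0S, hx0max⟩ := S.exists_max_image (worstProfit t α) hSne
  set S' : Finset (Fin k → ℕ) :=
    S.filter (fun x => worstProfit t α x0 ≤ worstProfit t α x) with hS'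
  have hS'ne : S'.Nonempty := ⟨x0, Finset.mem_filter.mpr ⟨hx0S, le_refl _⟩⟩
  obtain ⟨x', hx'S', hx'min⟩ := S'.exists_min_image (fun x : Fin k → ℕ => ∑ u : Fin k, u.val * x u) hS'ne
  rw [hS', Finset.mem_filter] at hx'S'
  obtain ⟨hx'S, hx'opt⟩ := hx'S'
  have hx'sum : ∑ u, x' u ≤ N := (Finset.mem_filter.mp hx'S).2
  refine ⟨x', hx'sum, ?_, ?_⟩
  · -- nonincreasing
    intro i j hij
    by_contra hcon
    push_neg at hcon
    have hij' : i < j := lt_of_le_of_ne hij (by rintro rfl; omega)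
    set y : Fin k → ℕ := x' ∘ Equiv.swap i j with hy
    have hysum : ∑ u, y u = ∑ u, x' u := by
      rw [hy]; exact Equiv.sum_comp (Equiv.swap i j) x'
    have hyS : y ∈ S := hmemS y (by rw [hysum]; exact hx'sum)
    have hyopt : worstProfit t α x0 ≤ worstProfit t α y :=
      le_trans hx'opt (worstProfit_swap_le t α ht_mono ht_nonneg x' i j hij' hcon)
    have hyS' : y ∈ S' := Finset.mem_filter.mpr ⟨hyS, hyopt⟩
    have hmeas := hx'min y hyS'
    have hyi : y i = x' j := by simp [hy]
    have hyj : y j = x' i := by simp [hy]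
    have hyu : ∀ u, u ≠ i → u ≠ j → y u = x' u := fun u h1 h2 => by
      simp [hy, Equiv.swap_apply_of_ne_of_ne h1 h2]
    have hne : i ≠ j := ne_of_lt hij'
    rw [sum_split i j hne (fun u : Fin k => u.val * x' u),
      sum_split i j hne (fun u : Fin k => u.val * y u), hyi, hyj] at hmeas
    have hrest : ∑ u ∈ (Finset.univ.erase i).erase j, u.val * y u
        = ∑ u ∈ (Finset.univ.erase i).erase j, u.val * x' u := by
      apply Finset.sum_congr rfl
      intro u hu
      rw [Finset.mem_erase, Finset.mem_erase] at hu
      rw [hyu u hu.2.1 hu.1]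
    rw [hrest] at hmeas
    have hlt : i.val * x' j + j.val * x' i < i.val * x' i + j.val * x' j := by
      have h1 : (i : ℕ) < (j : ℕ) := hij'
      nlinarith
    omega
  · intro x hx
    exact le_trans (hx0max x (hmemS x hx)) hx'opt
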